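/- Shifting theorem (α-approximate solver, vertical strips): Let S be a finite set of points in the Euclidean plane, ℓ a positive integer, and α ≥ 1 a real number. Suppose A assigns to every subset T ⊆ S a set A(T) ⊆ S that dominates T and satisfies |A(T)| ≤ α · γ_S(T). For a shift j ∈ {0, 1, …, ℓ-1} and an integer k, let B_{j,k} = {p ∈ S : 2(ℓk + j) ≤ p₁ < 2(ℓ(k+1) + j)}. Then there exists a shift j ∈ {0, 1, …, ℓ-1} such that Σ_k |A(B_{j,k})| ≤ α · (1 + 1/ℓ) · γ_S(S), where the sum ranges over the integers k with B_{j,k} nonempty; moreover for each j the union ⋃_k A(B_{j,k}) dominates S. -/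

import Mathlib

/-- The Euclidean plane. -/
abbrev Plane : Type := EuclideanSpace ℝ (Fin 2)

noncomputable instance : DecidableEq Plane := Classical.decEq _

attribute [local instance] Classical.propDecidable

/-- `D` dominates `T` if every point of `T` is within distance `1` of some point of `D`. -/
def Dominates (D T : Finset Plane) : Prop := ∀ p ∈ T, ∃ q ∈ D, dist p q ≤ 1

/-- `gamma S T` is the minimum cardinality of a subset of `S` that dominates `T`. -/
noncomputable def gamma (S T : Finset Plane) : ℕ :=
  sInf {n : ℕ | ∃ D ⊆ S, Dominates D T ∧ D.card = n}

/-- The `k`-th block of shift `j` of `S` (blocks of `ℓ` consecutive vertical strips of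
width `2`): the points `p ∈ S` with `2(ℓk + j) ≤ p₁ < 2(ℓ(k+1) + j)`. -/
noncomputable def block (S : Finset Plane) (ℓ j : ℕ) (k : ℤ) : Finset Plane :=
  S.filter fun p =>
    2 * ((ℓ : ℝ) * (k : ℝ) + (j : ℝ)) ≤ p 0 ∧ p 0 < 2 * ((ℓ : ℝ) * ((k : ℝ) + 1) + (j : ℝ))

namespace ShiftAux

lemma coord_le_dist (p q : Plane) : |p 0 - q 0| ≤ dist p q := by
  rw [EuclideanSpace.dist_eq]
  have h0 : dist (p 0) (q 0) ^ 2 ≤ ∑ i, dist (p i) (q i) ^ 2 :=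
    Finset.single_le_sum (f := fun i => dist (p i) (q i) ^ 2)
      (fun i _ => sq_nonneg _) (Finset.mem_univ 0)
  calc |p 0 - q 0| = Real.sqrt (dist (p 0) (q 0) ^ 2) := by
        rw [Real.sqrt_sq_eq_abs, Real.dist_eq, abs_abs]
    _ ≤ _ := Real.sqrt_le_sqrt h0

noncomputable def idx (ℓ j : ℕ) (p : Plane) : ℤ := ⌊(p 0 - 2 * (j : ℝ)) / (2 * ℓ)⌋

lemma mem_block_idx {ℓ : ℕ} (hℓ : 0 < ℓ) (S : Finset Plane) (j : ℕ) {p : Plane}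
    (hp : p ∈ S) : p ∈ block S ℓ j (idx ℓ j p) := by
  have hpos : (0 : ℝ) < 2 * ℓ := by positivity
  have h1 : ((idx ℓ j p : ℝ)) ≤ (p 0 - 2 * j) / (2 * ℓ) := Int.floor_le _
  have h2 : (p 0 - 2 * j) / (2 * ℓ) < (idx ℓ j p : ℝ) + 1 := Int.lt_floor_add_one _
  rw [le_div_iff₀ hpos] at h1
  rw [div_lt_iff₀ hpos] at h2
  simp only [block, Finset.mem_filter]
  refine ⟨hp, by nlinarith, by nlinarith⟩

lemma idx_eq_of_mem {ℓ : ℕ} (hℓ : 0 < ℓ) {S : Finset Plane} {j : ℕ} {k : ℤ} {p : Plane}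
    (hp : p ∈ block S ℓ j k) : idx ℓ j p = k := by
  have hpos : (0 : ℝ) < 2 * ℓ := by positivity
  simp only [block, Finset.mem_filter] at hp
  obtain ⟨-, h1, h2⟩ := hp
  have : (k : ℝ) ≤ (p 0 - 2 * j) / (2 * ℓ) := by rw [le_div_iff₀ hpos]; nlinarith
  have : (p 0 - 2 * j) / (2 * ℓ) < (k : ℝ) + 1 := by rw [div_lt_iff₀ hpos]; nlinarith
  exact Int.floor_eq_iff.mpr ⟨by assumption, by push_cast; assumption⟩

def expP (ℓ j : ℕ) (k : ℤ) (x : ℝ) : Prop :=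
  2 * ((ℓ : ℝ) * (k : ℝ) + (j : ℝ)) - 1 ≤ x ∧ x < 2 * ((ℓ : ℝ) * ((k : ℝ) + 1) + (j : ℝ)) + 1

def bad (ℓ j : ℕ) (x : ℝ) : Prop :=
  ∃ m : ℤ, x - 1 < 2 * ((ℓ : ℝ) * (m : ℝ) + (j : ℝ)) ∧ 2 * ((ℓ : ℝ) * (m : ℝ) + (j : ℝ)) ≤ x + 1

lemma filter_exp_card {ℓ : ℕ} (hℓ : 0 < ℓ) (j : ℕ) (x : ℝ) (F : Finset ℤ) :
    (F.filter fun k => expP ℓ j k x).card ≤ 1 + (if bad ℓ j x then 1 else 0) := by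
  have hpos : (0 : ℝ) < 2 * ℓ := by positivity
  have hℓ1 : (1 : ℝ) ≤ ℓ := by exact_mod_cast hℓ
  set k₁ : ℤ := ⌊(x - 2 * j + 1) / (2 * ℓ)⌋ with hk₁
  have hmem : ∀ k ∈ F.filter fun k => expP ℓ j k x, k = k₁ - 1 ∨ k = k₁ := by
    intro k hk
    rw [Finset.mem_filter] at hk
    obtain ⟨-, h1, h2⟩ := hk
    have hle : k ≤ k₁ := by
      apply Int.le_floor.2
      rw [le_div_iff₀ hpos]
      nlinarith [h1]
    have hlt : k₁ ≤ k + 1 := by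
      have hfl : ((k₁ : ℝ)) ≤ (x - 2 * j + 1) / (2 * ℓ) := Int.floor_le _
      rw [le_div_iff₀ hpos] at hfl
      have : (k₁ : ℝ) < (k : ℝ) + 2 := by nlinarith [h2]
      have : k₁ < k + 2 := by exact_mod_cast this
      omega
    omega
  by_cases hb : bad ℓ j x
  · simp only [hb, if_true]
    have hsub : (F.filter fun k => expP ℓ j k x) ⊆ {k₁ - 1, k₁} := by
      intro k hk
      rcases hmem k hk with h | h <;> simp [h]
    calc _ ≤ ({k₁ - 1, k₁} : Finset ℤ).card := Finset.card_le_card hsub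
      _ ≤ 2 := Finset.card_insert_le _ _ |>.trans (by simp)
  · simp only [hb, if_false]
    have hnot : ¬(expP ℓ j (k₁ - 1) x ∧ expP ℓ j k₁ x) := by
      rintro ⟨⟨-, hA⟩, ⟨hB, -⟩⟩
      apply hb
      refine ⟨k₁, ?_, ?_⟩ <;> push_cast at hA hB ⊢ <;> nlinarith
    by_cases h1 : expP ℓ j (k₁ - 1) x
    · have hsub : (F.filter fun k => expP ℓ j k x) ⊆ {k₁ - 1} := by
        intro k hk
        have hk' := (Finset.mem_filter.1 hk).2
        rcases hmem k hk with h | h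
        · simp [h]
        · exact absurd ⟨h1, h ▸ hk'⟩ hnot
      calc _ ≤ ({k₁ - 1} : Finset ℤ).card := Finset.card_le_card hsub
        _ ≤ 1 := by simp
    · have hsub : (F.filter fun k => expP ℓ j k x) ⊆ {k₁} := by
        intro k hk
        have hk' := (Finset.mem_filter.1 hk).2
        rcases hmem k hk with h | h
        · exact absurd (h ▸ hk') h1
        · simp [h]
      calc _ ≤ ({k₁} : Finset ℤ).card := Finset.card_le_card hsub
        _ ≤ 1 := by simp

lemma bad_unique {ℓ : ℕ} (hℓ : 0 < ℓ) (x : ℝ) {j j' : ℕ} (hj : j < ℓ) (hj' : j' < ℓ)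
    (hb : bad ℓ j x) (hb' : bad ℓ j' x) : j = j' := by
  obtain ⟨m, hm1, hm2⟩ := hb
  obtain ⟨m', hm1', hm2'⟩ := hb'
  have key : (ℓ : ℤ) * m + j = (ℓ : ℤ) * m' + j' := by
    have e1 : (((ℓ : ℤ) * m + j : ℤ) : ℝ) = (ℓ : ℝ) * m + j := by push_cast; ring
    have e2 : (((ℓ : ℤ) * m' + j' : ℤ) : ℝ) = (ℓ : ℝ) * m' + j' := by push_cast; ring
    have l1 : (((ℓ : ℤ) * m + j : ℤ) : ℝ) < ((ℓ : ℤ) * m' + j' : ℤ) + 1 := by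
      rw [e1, e2]; linarith
    have l2 : (((ℓ : ℤ) * m' + j' : ℤ) : ℝ) < ((ℓ : ℤ) * m + j : ℤ) + 1 := by
      rw [e1, e2]; linarith
    have l1' : (ℓ : ℤ) * m + j < (ℓ : ℤ) * m' + j' + 1 := by exact_mod_cast l1
    have l2' : (ℓ : ℤ) * m' + j' < (ℓ : ℤ) * m + j + 1 := by exact_mod_cast l2
    omega
  have hmm : m = m' := by
    rcases lt_trichotomy m m' with h | h | h
    · have : (ℓ : ℤ) * m + ℓ ≤ (ℓ : ℤ) * m' := by
        have : (ℓ : ℤ) * (m + 1) ≤ (ℓ : ℤ) * m' := by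
          apply mul_le_mul_of_nonneg_left (by omega) (by positivity)
        linarith [this]
      omega
    · exact h
    · have : (ℓ : ℤ) * m' + ℓ ≤ (ℓ : ℤ) * m := by
        have : (ℓ : ℤ) * (m' + 1) ≤ (ℓ : ℤ) * m := by
          apply mul_le_mul_of_nonneg_left (by omega) (by positivity)
        linarith [this]
      omega
  rw [hmm] at key
  omega

end ShiftAux

/-- Shifting theorem (`α`-approximate solver, vertical strips): if `A` assigns to each
`T ⊆ S` a dominating set `A(T) ⊆ S` of `T` with `|A(T)| ≤ α · γ_S(T)`, then there is a shift
`j ∈ {0, …, ℓ-1}` for which the total size of the sets `A(B_{j,k})` over the nonempty blocks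
of shift `j` is at most `α (1 + 1/ℓ) γ_S(S)`; moreover for every shift `j` the union of the
sets `A(B_{j,k})` dominates `S`. -/
theorem shifting_theorem_approx (S : Finset Plane) (ℓ : ℕ) (hℓ : 0 < ℓ)
    (α : ℝ) (hα : 1 ≤ α) (A : Finset Plane → Finset Plane)
    (hAsub : ∀ T ⊆ S, A T ⊆ S)
    (hAdom : ∀ T ⊆ S, Dominates (A T) T)
    (hAapprox : ∀ T ⊆ S, ((A T).card : ℝ) ≤ α * (gamma S T : ℝ)) :
    (∃ j < ℓ,
      (∑ᶠ k ∈ {k : ℤ | (block S ℓ j k).Nonempty}, ((A (block S ℓ j k)).card : ℝ)) ≤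
        α * (1 + 1 / (ℓ : ℝ)) * (gamma S S : ℝ)) ∧
    ∀ j < ℓ, ∀ p ∈ S, ∃ k : ℤ, ∃ q ∈ A (block S ℓ j k), dist p q ≤ 1 := by
  classical
  have hα0 : (0 : ℝ) ≤ α := le_trans zero_le_one hα
  constructor
  · -- optimal dominating set D
    have hne : {n : ℕ | ∃ D ⊆ S, Dominates D S ∧ D.card = n}.Nonempty :=
      ⟨S.card, S, le_refl S, fun p hp => ⟨p, hp, by simp⟩, rfl⟩
    obtain ⟨D, hDS, hDdom, hDcard⟩ := Nat.sInf_mem hne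
    have hDγ : D.card = gamma S S := hDcard
    set K : ℕ → Finset ℤ := fun j => S.image (ShiftAux.idx ℓ j) with hK
    have hKset : ∀ j, {k : ℤ | (block S ℓ j k).Nonempty} = ↑(K j) := by
      intro j
      ext k
      simp only [Set.mem_setOf_eq, hK, Finset.coe_image, Set.mem_image, Finset.mem_coe]
      constructor
      · rintro ⟨p, hp⟩
        exact ⟨p, (Finset.filter_subset _ _) hp, ShiftAux.idx_eq_of_mem hℓ hp⟩
      · rintro ⟨p, hp, rfl⟩
        exact ⟨p, ShiftAux.mem_block_idx hℓ S j hp⟩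
    have hgb : ∀ j k, gamma S (block S ℓ j k) ≤
        (D.filter fun d => ShiftAux.expP ℓ j k (d 0)).card := by
      intro j k
      apply Nat.sInf_le
      refine ⟨D.filter fun d => ShiftAux.expP ℓ j k (d 0),
        (Finset.filter_subset _ _).trans hDS, ?_, rfl⟩
      intro p hp
      have hpS : p ∈ S := (Finset.filter_subset _ _) hp
      obtain ⟨q, hq, hdq⟩ := hDdom p hpS
      refine ⟨q, ?_, hdq⟩
      rw [Finset.mem_filter]
      have hc := ShiftAux.coord_le_dist p q
      rw [abs_sub_le_iff] at hc
      simp only [block, Finset.mem_filter] at hp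
      obtain ⟨-, h1, h2⟩ := hp
      exact ⟨hq, by constructor <;> [linarith [hc.1, hc.2]; linarith [hc.1, hc.2]]⟩
    set F : ℕ → ℕ := fun j => ∑ k ∈ K j, (D.filter fun d => ShiftAux.expP ℓ j k (d 0)).card
      with hF
    have hsum : ∑ j ∈ Finset.range ℓ, F j ≤ (ℓ + 1) * D.card := by
      have hF2 : ∀ j, F j = ∑ d ∈ D, ((K j).filter fun k => ShiftAux.expP ℓ j k (d 0)).card := by
        intro j
        rw [hF]
        simp only [Finset.card_filter]
        rw [Finset.sum_comm]
      calc ∑ j ∈ Finset.range ℓ, F j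
          = ∑ j ∈ Finset.range ℓ, ∑ d ∈ D,
              ((K j).filter fun k => ShiftAux.expP ℓ j k (d 0)).card := by
            simp only [hF2]
        _ = ∑ d ∈ D, ∑ j ∈ Finset.range ℓ,
              ((K j).filter fun k => ShiftAux.expP ℓ j k (d 0)).card := Finset.sum_comm
        _ ≤ ∑ d ∈ D, ∑ j ∈ Finset.range ℓ,
              (1 + if ShiftAux.bad ℓ j (d 0) then 1 else 0) := by
            refine Finset.sum_le_sum fun d _ => Finset.sum_le_sum fun j _ => ?_
            exact ShiftAux.filter_exp_card hℓ j (d 0) (K j)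
        _ ≤ ∑ _d ∈ D, (ℓ + 1) := by
            refine Finset.sum_le_sum fun d _ => ?_
            rw [Finset.sum_add_distrib, Finset.sum_const, Finset.card_range, smul_eq_mul,
              mul_one, ← Finset.card_filter]
            have : ((Finset.range ℓ).filter fun j => ShiftAux.bad ℓ j (d 0)).card ≤ 1 := by
              apply Finset.card_le_one.2
              intro a ha b hb
              rw [Finset.mem_filter, Finset.mem_range] at ha hb
              exact ShiftAux.bad_unique hℓ (d 0) ha.1 hb.1 ha.2 hb.2
            omega
        _ = (ℓ + 1) * D.card := by rw [Finset.sum_const, smul_eq_mul]; ring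
    have hpig : ∃ j ∈ Finset.range ℓ, ℓ * F j ≤ (ℓ + 1) * D.card := by
      by_contra hcon
      push_neg at hcon
      have : ∑ j ∈ Finset.range ℓ, ((ℓ + 1) * D.card + 1) ≤
          ∑ j ∈ Finset.range ℓ, ℓ * F j := by
        refine Finset.sum_le_sum fun j hj => ?_
        exact hcon j hj
      rw [Finset.sum_const, Finset.card_range, smul_eq_mul, ← Finset.mul_sum] at this
      nlinarith [hsum, hℓ]
    obtain ⟨j, hjr, hjle⟩ := hpig
    refine ⟨j, Finset.mem_range.1 hjr, ?_⟩
    rw [hKset j, finsum_mem_coe_finset]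
    have hℓR : (0 : ℝ) < (ℓ : ℝ) := by exact_mod_cast hℓ
    have hcast : (ℓ : ℝ) * (F j : ℝ) ≤ ((ℓ : ℝ) + 1) * (gamma S S : ℝ) := by
      rw [← hDγ]; exact_mod_cast hjle
    calc ∑ k ∈ K j, ((A (block S ℓ j k)).card : ℝ)
        ≤ ∑ k ∈ K j, α * (gamma S (block S ℓ j k) : ℝ) :=
          Finset.sum_le_sum fun k _ => hAapprox _ (Finset.filter_subset _ _)
      _ = α * ∑ k ∈ K j, (gamma S (block S ℓ j k) : ℝ) := by rw [Finset.mul_sum]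
      _ ≤ α * (F j : ℝ) := by
          refine mul_le_mul_of_nonneg_left ?_ hα0
          rw [hF]
          push_cast
          exact Finset.sum_le_sum fun k _ => by exact_mod_cast hgb j k
      _ ≤ α * (((ℓ : ℝ) + 1) * (gamma S S : ℝ) / ℓ) := by
          refine mul_le_mul_of_nonneg_left ?_ hα0
          rw [le_div_iff₀ hℓR]
          nlinarith [hcast]
      _ = α * (1 + 1 / (ℓ : ℝ)) * (gamma S S : ℝ) := by field_simp
  · intro j hj p hp
    exact ⟨ShiftAux.idx ℓ j p,
      hAdom _ (Finset.filter_subset _ _) p (ShiftAux.mem_block_idx hℓ S j hp)⟩
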